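/- Let f be a real ternary quartic (homogeneous of degree 4 in 3 variables) and suppose there exist linearly independent vectors u, v ∈ ℝ³ such that the binary quartic g(s,t) = f(s·u + t·v) factors over ℝ as a product of four real linear forms in s,t, and g is not a real scalar multiple of the 4th power of a linear form in s,t. Then in every decomposition f = λ₁·l₁⁴ + … + λ_k·l_k⁴ with nonzero real numbers λᵢ and nonzero real linear forms lᵢ, at least two of the λᵢ are positive and at least two of the λᵢ are negative. -/

import Mathlib

open MvPolynomial

/-- The real (symmetric) rank of a polynomial `f` in `n` variables with respect to
`d`-th powers of real linear forms: the least `k` such that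
`f = ∑ j, λⱼ • lⱼ ^ d` with `λⱼ ∈ ℝ` and `lⱼ` real linear forms. -/
noncomputable def realRank (n d : ℕ) (f : MvPolynomial (Fin n) ℝ) : ℕ :=
  sInf {k | ∃ (lam : Fin k → ℝ) (l : Fin k → Fin n → ℝ),
    f = ∑ j, MvPolynomial.C (lam j) * (∑ i, MvPolynomial.C (l j i) * MvPolynomial.X i) ^ d}

/-- Exponent vectors of monomials of degree `d` in `n` variables. -/
abbrev Mon (n d : ℕ) := {e : Fin n → Fin (d + 1) // ∑ i, (e i : ℕ) = d}

/-- Coefficient space of degree-`d` forms in `n` variables, with its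
Euclidean (product) topology. -/
abbrev Coef (n d : ℕ) := Mon n d → ℝ

/-- The degree-`d` form whose coefficients are given by `c`. -/
noncomputable def toForm (n d : ℕ) (c : Coef n d) : MvPolynomial (Fin n) ℝ :=
  ∑ e : Mon n d, MvPolynomial.C (c e) * ∏ i, MvPolynomial.X i ^ ((e.1 i : ℕ))

/-- `r` is a typical rank for degree-`d` forms in `n` variables. -/
def IsTypicalRank (n d r : ℕ) : Prop :=
  (interior {c : Coef n d | realRank n d (toForm n d c) = r}).Nonempty

/-! ### Auxiliary lemmas -/

section Aux

open Finset

set_option maxHeartbeats 1600000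

lemma prop_coord {p q x y : ℝ} (h0 : ¬(x = 0 ∧ y = 0)) (h : p * y = q * x) :
    ∃ c, p = c * x ∧ q = c * y := by
  by_cases hx : x = 0
  · have hy : y ≠ 0 := fun hy => h0 ⟨hx, hy⟩
    refine ⟨q / y, ?_, by field_simp⟩
    have hpy : p * y = 0 := by rw [h, hx, mul_zero]
    have hp : p = 0 := by
      rcases mul_eq_zero.1 hpy with h' | h'
      · exact h'
      · exact absurd h' hy
    simp [hp, hx]
  · refine ⟨p / x, by field_simp, ?_⟩
    field_simp
    linarith [h]

lemma sum_quart_eq_zero {ι : Type*} (T : Finset ι) (lam w : ι → ℝ)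
    (hpos : ∀ j ∈ T, 0 < lam j)
    (h : ∑ j ∈ T, lam j * (w j) ^ 4 = 0) : ∀ j ∈ T, w j = 0 := by
  have hterm : ∀ j ∈ T, lam j * (w j) ^ 4 = 0 := by
    rw [Finset.sum_eq_zero_iff_of_nonneg] at h
    · exact h
    · intro j hj
      have := hpos j hj
      positivity
  intro j hj
  have h2 := hterm j hj
  have hl := (hpos j hj).ne'
  have h3 : (w j) ^ 4 = 0 := by
    rcases mul_eq_zero.1 h2 with h' | h'
    · exact absurd h' hl
    · exact h'
  exact pow_eq_zero_iff (by norm_num) |>.1 h3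

lemma convex_mid {G : ℝ → ℝ} (hG : ConvexOn ℝ Set.univ G) (x y : ℝ) :
    G ((x + y) / 2) ≤ (G x + G y) / 2 := by
  have h := hG.2 (Set.mem_univ x) (Set.mem_univ y)
    (by norm_num : (0:ℝ) ≤ 1/2) (by norm_num : (0:ℝ) ≤ 1/2) (by norm_num)
  simp only [smul_eq_mul] at h
  calc G ((x+y)/2) = G (1/2 * x + 1/2 * y) := by ring_nf
    _ ≤ 1/2 * G x + 1/2 * G y := h
    _ = (G x + G y)/2 := by ring

lemma convex_between {G : ℝ → ℝ} (hG : ConvexOn ℝ Set.univ G) {x z y : ℝ}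
    (hxz : x < z) (hzy : z < y) (hx : G x ≤ 0) (hy : G y ≤ 0) : G z ≤ 0 := by
  have hyx : (0:ℝ) < y - x := by linarith
  have hne : y - x ≠ 0 := ne_of_gt hyx
  have ha0 : 0 ≤ (y - z) / (y - x) := div_nonneg (by linarith) (by linarith)
  have hb0 : 0 ≤ (z - x) / (y - x) := div_nonneg (by linarith) (by linarith)
  have hab : (y - z) / (y - x) + (z - x) / (y - x) = 1 := by field_simp; ring
  have hz : (y - z) / (y - x) * x + (z - x) / (y - x) * y = z := by field_simp; ring
  have hle := hG.2 (Set.mem_univ x) (Set.mem_univ y) ha0 hb0 hab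
  simp only [smul_eq_mul, hz] at hle
  nlinarith [mul_nonneg ha0 (neg_nonneg.2 hx), mul_nonneg hb0 (neg_nonneg.2 hy)]

lemma convex_between_neg {G : ℝ → ℝ} (hG : ConvexOn ℝ Set.univ G) {x z y : ℝ}
    (hxz : x < z) (hzy : z < y) (hx : G x ≤ 0) (hy : G y ≤ 0)
    (hneg : G x < 0 ∨ G y < 0) : G z < 0 := by
  have hyx : (0:ℝ) < y - x := by linarith
  have hne : y - x ≠ 0 := ne_of_gt hyx
  have ha0 : 0 < (y - z) / (y - x) := div_pos (by linarith) (by linarith)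
  have hb0 : 0 < (z - x) / (y - x) := div_pos (by linarith) (by linarith)
  have hab : (y - z) / (y - x) + (z - x) / (y - x) = 1 := by field_simp; ring
  have hz : (y - z) / (y - x) * x + (z - x) / (y - x) * y = z := by field_simp; ring
  have hle := hG.2 (Set.mem_univ x) (Set.mem_univ y) ha0.le hb0.le hab
  simp only [smul_eq_mul, hz] at hle
  rcases hneg with h' | h'
  · nlinarith [mul_nonneg hb0.le (neg_nonneg.2 hy)]
  · nlinarith [mul_nonneg ha0.le (neg_nonneg.2 hx)]

lemma convex_outside {G : ℝ → ℝ} (hG : ConvexOn ℝ Set.univ G) {x y z : ℝ}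
    (hxy : x < y) (hyz : y < z) (hx : G x = 0) (hy : G y = 0) : 0 ≤ G z := by
  have hzx : (0:ℝ) < z - x := by linarith
  have hne : z - x ≠ 0 := ne_of_gt hzx
  have ha0 : 0 ≤ (z - y) / (z - x) := div_nonneg (by linarith) (by linarith)
  have hb0 : 0 < (y - x) / (z - x) := div_pos (by linarith) (by linarith)
  have hab : (z - y) / (z - x) + (y - x) / (z - x) = 1 := by field_simp; ring
  have hmid : (z - y) / (z - x) * x + (y - x) / (z - x) * z = y := by field_simp; ring
  have hle := hG.2 (Set.mem_univ x) (Set.mem_univ z) ha0 hb0.le hab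
  simp only [smul_eq_mul, hmid] at hle
  rw [hx, hy] at hle
  nlinarith

lemma convex_affine_quart (p q : ℝ) :
    ConvexOn ℝ Set.univ fun τ : ℝ => (p + q * τ) ^ 4 := by
  have h4 : Even 4 := ⟨2, rfl⟩
  have hpow : ConvexOn ℝ Set.univ fun x : ℝ => x ^ 4 := h4.convexOn_pow
  have h := hpow.comp_affineMap (AffineMap.lineMap p (p + q) : ℝ →ᵃ[ℝ] ℝ)
  simp only [Set.preimage_univ] at h
  refine h.congr ?_
  intro τ _
  simp [AffineMap.lineMap_apply, Function.comp]
  ring_nf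

lemma convex_quart_sum {ι : Type*} (T : Finset ι) (lam p q : ι → ℝ)
    (hpos : ∀ j ∈ T, 0 ≤ lam j) (μ : ℝ) :
    ConvexOn ℝ Set.univ (fun τ : ℝ => (∑ j ∈ T, lam j * (p j + q j * τ) ^ 4) - μ) := by
  have hsum : ConvexOn ℝ Set.univ (fun τ : ℝ => ∑ j ∈ T, lam j * (p j + q j * τ) ^ 4) := by
    classical
    induction T using Finset.induction with
    | empty => simpa using convexOn_const (0:ℝ) convex_univ
    | insert a s hj ih =>
      simp only [Finset.sum_insert hj]
      have h1 : ConvexOn ℝ Set.univ (fun τ : ℝ => lam a * (p a + q a * τ) ^ 4) := by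
        have := (convex_affine_quart (p a) (q a)).smul (hpos a (Finset.mem_insert_self a s))
        simpa [smul_eq_mul] using this
      have h2 := ih (fun j hj' => hpos j (Finset.mem_insert_of_mem hj'))
      exact h1.add h2
  exact hsum.add (convexOn_const (-μ) convex_univ)

lemma prod_prop_pow (a b : Fin 4 → ℝ) (j0 : Fin 4) (h0 : ¬(a j0 = 0 ∧ b j0 = 0))
    (hp : ∀ j, a j * b j0 = b j * a j0) :
    ∃ c, ∀ s t : ℝ, (∏ j, (a j * s + b j * t)) = c * (a j0 * s + b j0 * t) ^ 4 := by
  have hc : ∀ j, ∃ c, a j = c * a j0 ∧ b j = c * b j0 := fun j => prop_coord h0 (hp j)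
  choose c hc1 hc2 using hc
  refine ⟨∏ j, c j, fun s t => ?_⟩
  have hfac : ∀ j : Fin 4, a j * s + b j * t = c j * (a j0 * s + b j0 * t) := by
    intro j; rw [hc1 j, hc2 j]; ring
  calc (∏ j, (a j * s + b j * t)) = ∏ j, (c j * (a j0 * s + b j0 * t)) :=
        Finset.prod_congr rfl (fun j _ => hfac j)
    _ = (∏ j, c j) * (a j0 * s + b j0 * t) ^ 4 := by
        rw [Finset.prod_mul_distrib, Finset.prod_const]
        norm_num

lemma vanish_pow {k : ℕ} (lam A B : Fin k → ℝ) (T : Finset (Fin k))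
    (hTpos : ∀ j ∈ T, 0 < lam j) (x y : ℝ) (hxy0 : ¬(x = 0 ∧ y = 0))
    (hvan : ∑ j ∈ T, lam j * (A j * y + B j * (-x)) ^ 4 = 0) :
    ∃ C, ∀ s t : ℝ, ∑ j ∈ T, lam j * (A j * s + B j * t) ^ 4 = C * (x * s + y * t) ^ 4 := by
  have hzero : ∀ j ∈ T, A j * y + B j * (-x) = 0 :=
    sum_quart_eq_zero T lam _ hTpos hvan
  have hc : ∀ j ∈ T, ∃ c, A j = c * x ∧ B j = c * y := by
    intro j hj
    exact prop_coord hxy0 (by linarith [hzero j hj])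
  classical
  choose! c hc1 hc2 using hc
  refine ⟨∑ j ∈ T, lam j * (c j) ^ 4, fun s t => ?_⟩
  rw [Finset.sum_mul]
  refine Finset.sum_congr rfl (fun j hj => ?_)
  rw [hc1 j hj, hc2 j hj]
  ring

lemma caseA {k : ℕ} (lam A B : Fin k → ℝ) (a b : Fin 4 → ℝ) (T : Finset (Fin k))
    (hTpos : ∀ j ∈ T, 0 < lam j) (i1 : Fin 4) (h0 : ¬(a i1 = 0 ∧ b i1 = 0))
    (hFz : ∀ s t : ℝ, (∏ j, (a j * s + b j * t)) = ∑ j ∈ T, lam j * (A j * s + B j * t) ^ 4)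
    (hnot : ¬ ∃ c p q : ℝ, ∀ s t : ℝ, (∏ j, (a j * s + b j * t)) = c * (p * s + q * t) ^ 4) :
    False := by
  have hroot : (∏ j, (a j * (b i1) + b j * (-(a i1)))) = 0 :=
    Finset.prod_eq_zero (Finset.mem_univ i1) (by ring)
  have hvan : ∑ j ∈ T, lam j * (A j * (b i1) + B j * (-(a i1))) ^ 4 = 0 := by
    rw [← hFz]; exact hroot
  obtain ⟨C, hC⟩ := vanish_pow lam A B T hTpos (a i1) (b i1) h0 hvan
  exact hnot ⟨C, a i1, b i1, fun s t => by rw [hFz s t, hC s t]⟩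

lemma caseB {k : ℕ} (lam A B : Fin k → ℝ) (a b : Fin 4 → ℝ)
    (hnot : ¬ ∃ c p q : ℝ, ∀ s t : ℝ, (∏ j, (a j * s + b j * t)) = c * (p * s + q * t) ^ 4)
    (i1 j1 : Fin 4) (hij : a i1 * b j1 ≠ a j1 * b i1)
    (j0 : Fin k) (hj0 : lam j0 < 0)
    (hTpos : ∀ j ∈ Finset.univ.erase j0, 0 < lam j)
    (hFT : ∀ s t : ℝ, (∏ j, (a j * s + b j * t)) + (-lam j0) * (A j0 * s + B j0 * t) ^ 4
      = ∑ j ∈ Finset.univ.erase j0, lam j * (A j * s + B j * t) ^ 4)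
    (hm : ¬(A j0 = 0 ∧ B j0 = 0)) : False := by
  classical
  set T := Finset.univ.erase j0 with hT
  set μ := -lam j0 with hμdef
  have hμ : 0 < μ := by simp only [hμdef]; linarith
  set mα := A j0 with hmα
  set mβ := B j0 with hmβ
  have hr : 0 < mα ^ 2 + mβ ^ 2 := by
    rcases not_and_or.mp hm with h | h
    · have := pow_two_pos_of_ne_zero h
      nlinarith [sq_nonneg mβ]
    · have := pow_two_pos_of_ne_zero h
      nlinarith [sq_nonneg mα]
  set r := mα ^ 2 + mβ ^ 2 with hrdef
  have hrne : r ≠ 0 := ne_of_gt hr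
  by_cases hPm : (∏ j, (a j * mβ + b j * (-mα))) = 0
  · -- the restriction of the negative form divides the product
    have hvan2 : ∑ j ∈ T, lam j * (A j * mβ + B j * (-mα)) ^ 4 = 0 := by
      have := hFT mβ (-mα)
      rw [hPm] at this
      have hz : (mα * mβ + mβ * (-mα)) = 0 := by ring
      rw [← this, hz]
      ring
    obtain ⟨C, hC⟩ := vanish_pow lam A B T hTpos mα mβ hm hvan2
    refine hnot ⟨C - μ, mα, mβ, fun s t => ?_⟩
    have h1 := hFT s t
    rw [hC s t] at h1
    linarith [h1]
  · -- convexity branch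
    set e1 := mα / r with he1
    set e2 := mβ / r with he2
    have hone : mα * e1 + mβ * e2 = 1 := by
      rw [he1, he2]; field_simp; ring
    set A' : Fin 4 → ℝ := fun j => a j * e1 + b j * e2 with hA'
    set B' : Fin 4 → ℝ := fun j => a j * mβ - b j * mα with hB'
    set P' : Fin k → ℝ := fun j => A j * e1 + B j * e2 with hP'
    set Q' : Fin k → ℝ := fun j => A j * mβ - B j * mα with hQ'
    set Gs : ℝ → ℝ := fun τ => (∑ j ∈ T, lam j * (P' j + Q' j * τ) ^ 4) - μ with hGs
    have hGconv : ConvexOn ℝ Set.univ Gs :=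
      convex_quart_sum T lam P' Q' (fun j hj => (hTpos j hj).le) μ
    have hGprod : ∀ τ : ℝ, Gs τ = ∏ j, (A' j + B' j * τ) := by
      intro τ
      have h2 := hFT (e1 + τ * mβ) (e2 - τ * mα)
      have h3 : mα * (e1 + τ * mβ) + mβ * (e2 - τ * mα) = 1 := by
        linear_combination hone
      have h4 : ∀ j, A j * (e1 + τ * mβ) + B j * (e2 - τ * mα) = P' j + Q' j * τ := by
        intro j; rw [hP', hQ']; ring
      have h5 : ∀ j : Fin 4, a j * (e1 + τ * mβ) + b j * (e2 - τ * mα) = A' j + B' j * τ := by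
        intro j; rw [hA', hB']; ring
      rw [h3] at h2
      rw [Finset.prod_congr rfl (fun j _ => h5 j)] at h2
      rw [Finset.sum_congr rfl (fun j _ => by rw [h4 j])] at h2
      simp only [hGs]
      simp only [one_pow, mul_one] at h2
      linarith [h2]
    have hC0 : (∏ j, B' j) ≠ 0 := by
      intro h
      apply hPm
      rw [Finset.prod_congr rfl
        (fun j _ => show a j * mβ + b j * (-mα) = B' j by rw [hB']; ring)]
      exact h
    have hBne : ∀ j, B' j ≠ 0 := fun j => Finset.prod_ne_zero_iff.1 hC0 j (Finset.mem_univ j)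
    set ρ : Fin 4 → ℝ := fun j => -(A' j) / B' j with hρ
    have hfactor : ∀ (j : Fin 4) (τ : ℝ), A' j + B' j * τ = B' j * (τ - ρ j) := by
      intro j τ
      have hB := hBne j
      rw [hρ]
      simp only
      field_simp
      ring
    have hGnf : ∀ τ : ℝ, Gs τ = (∏ j, B' j) * ∏ j, (τ - ρ j) := by
      intro τ
      rw [hGprod τ, ← Finset.prod_mul_distrib]
      exact Finset.prod_congr rfl (fun j _ => hfactor j τ)
    have hρne : ρ i1 ≠ ρ j1 := by
      intro h
      apply hij
      rw [hρ] at h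
      simp only at h
      rw [div_eq_div_iff (hBne i1) (hBne j1)] at h
      have hdet : A' i1 * B' j1 - A' j1 * B' i1
          = (a j1 * b i1 - a i1 * b j1) * (mα * e1 + mβ * e2) := by
        rw [hA', hB']; ring
      rw [hone, mul_one] at hdet
      nlinarith [hdet, h]
    obtain ⟨jmin, _, hjmin⟩ := Finset.exists_mem_eq_inf' (Finset.univ_nonempty (α := Fin 4)) ρ
    obtain ⟨jmax, _, hjmax⟩ := Finset.exists_mem_eq_sup' (Finset.univ_nonempty (α := Fin 4)) ρ
    set r1 := Finset.univ.inf' Finset.univ_nonempty ρ with hr1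
    set r2 := Finset.univ.sup' Finset.univ_nonempty ρ with hr2
    have hr1le : ∀ j, r1 ≤ ρ j := fun j => Finset.inf'_le ρ (Finset.mem_univ j)
    have hler2 : ∀ j, ρ j ≤ r2 := fun j => Finset.le_sup' ρ (Finset.mem_univ j)
    have hr12 : r1 < r2 := by
      by_contra hcc
      push_neg at hcc
      have e1' : ρ i1 = ρ j1 := by
        have := hr1le i1; have := hler2 i1; have := hr1le j1; have := hler2 j1
        linarith
      exact hρne e1'
    have hGr1 : Gs r1 = 0 := by
      have hz : (∏ j, (r1 - ρ j)) = 0 :=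
        Finset.prod_eq_zero (Finset.mem_univ jmin) (by rw [← hjmin]; ring)
      rw [hGnf, hz, mul_zero]
    have hGr2 : Gs r2 = 0 := by
      have hz : (∏ j, (r2 - ρ j)) = 0 :=
        Finset.prod_eq_zero (Finset.mem_univ jmax) (by rw [← hjmax]; ring)
      rw [hGnf, hz, mul_zero]
    obtain ⟨τ0, hτ0mem, hτ0nin⟩ :=
      (Set.Ioo_infinite hr12).exists_notMem_finset (Finset.image ρ Finset.univ)
    have hτ0ne : ∀ j, τ0 ≠ ρ j := fun j h =>
      hτ0nin (Finset.mem_image.2 ⟨j, Finset.mem_univ j, h.symm⟩)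
    have hτ0a : r1 < τ0 := hτ0mem.1
    have hτ0b : τ0 < r2 := hτ0mem.2
    have hGτ0le : Gs τ0 ≤ 0 := convex_between hGconv hτ0a hτ0b (le_of_eq hGr1) (le_of_eq hGr2)
    have hGτ0ne : Gs τ0 ≠ 0 := by
      rw [hGnf]
      exact mul_ne_zero hC0
        (Finset.prod_ne_zero_iff.2 (fun j _ => sub_ne_zero.2 (hτ0ne j)))
    have hGτ0 : Gs τ0 < 0 := lt_of_le_of_ne hGτ0le hGτ0ne
    have hdich : ∀ j, ρ j = r1 ∨ ρ j = r2 := by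
      intro j
      by_contra hcon2
      push_neg at hcon2
      have h1 : r1 < ρ j := lt_of_le_of_ne (hr1le j) (Ne.symm hcon2.1)
      have h2 : ρ j < r2 := lt_of_le_of_ne (hler2 j) hcon2.2
      have hGρ : Gs (ρ j) = 0 := by
        have hz : (∏ j', (ρ j - ρ j')) = 0 :=
          Finset.prod_eq_zero (Finset.mem_univ j) (by ring)
        rw [hGnf, hz, mul_zero]
      rcases lt_trichotomy (ρ j) τ0 with h | h | h
      · have := convex_between_neg hGconv h1 h (le_of_eq hGr1) hGτ0.le (Or.inr hGτ0)
        linarith [hGρ]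
      · exact hτ0ne j h.symm
      · have := convex_between_neg hGconv h h2 hGτ0.le (le_of_eq hGr2) (Or.inl hGτ0)
        linarith [hGρ]
    set S := Finset.univ.filter (fun j => ρ j = r1) with hS
    set n1 := S.card with hn1
    have hjminS : jmin ∈ S := Finset.mem_filter.2 ⟨Finset.mem_univ _, hjmin.symm⟩
    have hρjmax : ρ jmax = r2 := hjmax.symm
    have hjmaxS : jmax ∉ S := by
      intro h
      have := (Finset.mem_filter.1 h).2
      rw [hρjmax] at this
      exact (ne_of_gt hr12) this
    have hn1pos : 1 ≤ n1 := Finset.card_pos.2 ⟨jmin, hjminS⟩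
    have hcards : n1 + (Finset.univ.filter (fun j => ¬ ρ j = r1)).card = 4 := by
      rw [hn1, hS, Finset.card_filter_add_card_filter_not]
      simp
    have hn1le : n1 ≤ 3 := by
      have h4 : n1 < 4 := by
        have hss : S ⊂ Finset.univ :=
          (Finset.ssubset_iff_of_subset (Finset.subset_univ S)).2
            ⟨jmax, Finset.mem_univ _, hjmaxS⟩
        have := Finset.card_lt_card hss
        simpa using this
      omega
    have hprodsplit : ∀ τ : ℝ, (∏ j, (τ - ρ j)) = (τ - r1) ^ n1 * (τ - r2) ^ (4 - n1) := by
      intro τ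
      rw [← Finset.prod_filter_mul_prod_filter_not Finset.univ (fun j => ρ j = r1)]
      congr 1
      · rw [Finset.prod_congr rfl (fun j hj => by rw [(Finset.mem_filter.1 hj).2]),
          Finset.prod_const]
      · have hc2 : ∀ j ∈ Finset.univ.filter (fun j => ¬ ρ j = r1), ρ j = r2 :=
          fun j hj => (hdich j).resolve_left (Finset.mem_filter.1 hj).2
        rw [Finset.prod_congr rfl (fun j hj => by rw [hc2 j hj]), Finset.prod_const]
        congr 1
        omega
    set C := ∏ j, B' j with hC
    have hGform : ∀ τ : ℝ, Gs τ = C * ((τ - r1) ^ n1 * (τ - r2) ^ (4 - n1)) := by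
      intro τ; rw [hGnf, hprodsplit]
    have hCpos : 0 < C := by
      have h1 : 0 ≤ Gs (r2 + 1) := convex_outside hGconv hr12 (by linarith) hGr1 hGr2
      rw [hGform] at h1
      have h2 : (0:ℝ) < (r2 + 1 - r1) ^ n1 := pow_pos (by linarith) _
      have h3 : (r2 + 1 - r2 : ℝ) = 1 := by ring
      rw [h3, one_pow, mul_one] at h1
      rcases hC0.lt_or_gt with hcl | hcl
      · exfalso; nlinarith [mul_pos (neg_pos.2 hcl) h2]
      · exact hcl
    have hd : 0 < r2 - r1 := by linarith
    have hcd : 0 < C * (r2 - r1) ^ 4 := mul_pos hCpos (pow_pos hd 4)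
    have hn1cases : n1 = 1 ∨ n1 = 2 ∨ n1 = 3 := by omega
    rcases hn1cases with h | h | h
    · have hx := hGform ((r1 + r2) / 2)
      have hmid := hGform (((r1 + r2) / 2 + r2) / 2)
      rw [h] at hx hmid
      norm_num at hx hmid
      have hcm := convex_mid hGconv ((r1 + r2) / 2) r2
      rw [hx, hmid, hGr2] at hcm
      nlinarith [hcm, hcd]
    · have h0 := hGform τ0
      rw [h] at h0
      norm_num at h0
      have h1 : 0 < (τ0 - r1) ^ 2 := pow_pos (by linarith) 2
      have h2 : 0 < (τ0 - r2) ^ 2 := pow_two_pos_of_ne_zero (sub_ne_zero.2 (ne_of_lt hτ0b))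
      nlinarith [hGτ0, h0, mul_pos hCpos (mul_pos h1 h2)]
    · have hx := hGform ((r1 + r2) / 2)
      have hmid := hGform (((r1 + r2) / 2 + r1) / 2)
      rw [h] at hx hmid
      norm_num at hx hmid
      have hcm := convex_mid hGconv ((r1 + r2) / 2) r1
      rw [hx, hmid, hGr1] at hcm
      nlinarith [hcm, hcd]

lemma core {k : ℕ} (lam A B : Fin k → ℝ) (a b : Fin 4 → ℝ)
    (hlam : ∀ j, lam j ≠ 0)
    (hF : ∀ s t : ℝ, (∏ j, (a j * s + b j * t)) = ∑ j, lam j * (A j * s + B j * t) ^ 4)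
    (hnot : ¬ ∃ c p q : ℝ, ∀ s t : ℝ, (∏ j, (a j * s + b j * t)) = c * (p * s + q * t) ^ 4) :
    ∃ j1 j2 : Fin k, j1 ≠ j2 ∧ lam j1 < 0 ∧ lam j2 < 0 := by
  classical
  by_contra hcon
  push_neg at hcon
  have huniq : ∀ j1 j2, lam j1 < 0 → lam j2 < 0 → j1 = j2 := by
    intro j1 j2 h1 h2
    by_contra hne
    have := hcon j1 j2 hne h1
    linarith
  have hfac : ∀ j : Fin 4, ¬(a j = 0 ∧ b j = 0) := by
    rintro j ⟨hja, hjb⟩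
    exact hnot ⟨0, 1, 0, fun s t => by
      rw [Finset.prod_eq_zero (Finset.mem_univ j) (by rw [hja, hjb]; ring)]; ring⟩
  have hind : ∃ i1 j1 : Fin 4, a i1 * b j1 ≠ a j1 * b i1 := by
    by_contra hall
    push_neg at hall
    obtain ⟨c, hcp⟩ := prod_prop_pow a b 0 (hfac 0)
      (fun j => (hall j 0).trans (mul_comm _ _))
    exact hnot ⟨c, a 0, b 0, hcp⟩
  obtain ⟨i1, j1, hij⟩ := hind
  by_cases hexneg : ∃ j0, lam j0 < 0
  case neg =>
    push_neg at hexneg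
    have hpos : ∀ j ∈ Finset.univ, 0 < lam j := by
      intro j _
      rcases (hlam j).lt_or_gt with h | h
      · exact absurd h (by simpa using hexneg j)
      · exact h
    exact caseA lam A B a b Finset.univ hpos i1 (hfac i1) hF hnot
  case pos =>
    obtain ⟨j0, hj0⟩ := hexneg
    have hTpos : ∀ j ∈ Finset.univ.erase j0, 0 < lam j := by
      intro j hj
      have hne := Finset.ne_of_mem_erase hj
      rcases (hlam j).lt_or_gt with h | h
      · exact absurd (huniq j j0 h hj0) hne
      · exact h
    have hFT : ∀ s t : ℝ, (∏ j, (a j * s + b j * t)) + (-lam j0) * (A j0 * s + B j0 * t) ^ 4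
        = ∑ j ∈ Finset.univ.erase j0, lam j * (A j * s + B j * t) ^ 4 := by
      intro s t
      have hsum := Finset.sum_erase_add Finset.univ
        (fun j => lam j * (A j * s + B j * t) ^ 4) (Finset.mem_univ j0)
      rw [hF s t, ← hsum]; ring
    by_cases hm : A j0 = 0 ∧ B j0 = 0
    · have hFz : ∀ s t : ℝ, (∏ j, (a j * s + b j * t))
          = ∑ j ∈ Finset.univ.erase j0, lam j * (A j * s + B j * t) ^ 4 := by
        intro s t
        have := hFT s t
        rw [hm.1, hm.2] at this
        linarith [this]
      exact caseA lam A B a b _ hTpos i1 (hfac i1) hFz hnot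
    · exact caseB lam A B a b hnot i1 j1 hij j0 hj0 hTpos hFT hm

end Aux

/-- If a ternary quartic `f` restricts, along a real line spanned by linearly independent
`u, v`, to a binary quartic that splits into four real linear factors but is not a scalar
multiple of a fourth power, then every decomposition of `f` as a linear combination of fourth
powers of nonzero real linear forms with nonzero coefficients has at least two positive and at
least two negative coefficients. -/
theorem quartic_line_two_pos_two_neg
    (f : MvPolynomial (Fin 3) ℝ) (hf : f.IsHomogeneous 4)
    (u v : Fin 3 → ℝ) (huv : LinearIndependent ℝ ![u, v])
    (g : MvPolynomial (Fin 2) ℝ)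
    (hg : g = MvPolynomial.aeval
      (fun i : Fin 3 => C (u i) * X 0 + C (v i) * X 1) f)
    (hsplit : ∃ a b : Fin 4 → ℝ,
      g = ∏ j : Fin 4, (C (a j) * X 0 + C (b j) * X 1))
    (hnotpow : ¬ ∃ c a b : ℝ, g = C c * (C a * X 0 + C b * X 1) ^ 4)
    (k : ℕ) (lam : Fin k → ℝ) (l : Fin k → Fin 3 → ℝ)
    (hlam : ∀ j, lam j ≠ 0) (hl : ∀ j, l j ≠ 0)
    (hdec : f = ∑ j : Fin k, C (lam j) * (∑ i : Fin 3, C (l j i) * X i) ^ 4) :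
    2 ≤ {j : Fin k | 0 < lam j}.ncard ∧ 2 ≤ {j : Fin k | lam j < 0}.ncard := by
  classical
  obtain ⟨a, b, hgsplit⟩ := hsplit
  set A : Fin k → ℝ := fun j => ∑ i, l j i * u i with hA
  set B : Fin k → ℝ := fun j => ∑ i, l j i * v i with hB
  have hevalg : ∀ s t : ℝ, eval ![s, t] g = ∏ j, (a j * s + b j * t) := by
    intro s t; rw [hgsplit]; simp [eval_prod]
  have hevalf : ∀ x : Fin 3 → ℝ, eval x f = ∑ j, lam j * (∑ i, l j i * x i) ^ 4 := by
    intro x; rw [hdec]; simp [eval_sum]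
  have hgf : ∀ s t : ℝ, eval ![s, t] g = ∑ j, lam j * (A j * s + B j * t) ^ 4 := by
    intro s t
    have h0 : eval ![s, t] g = eval (fun i => u i * s + v i * t) f := by
      rw [hg, aeval_def, eval_eval₂]
      have h1 : ((eval ![s, t]).comp (algebraMap ℝ (MvPolynomial (Fin 2) ℝ)))
          = RingHom.id ℝ := by
        ext r
        simp [algebraMap_eq]
      rw [h1, eval₂_id]
      have h2 : (fun i => (eval ![s, t]) (C (u i) * X 0 + C (v i) * X 1))
          = fun i => u i * s + v i * t := by
        funext i
        simp
      rw [h2]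
    rw [h0, hevalf]
    refine Finset.sum_congr rfl (fun j _ => ?_)
    have hinner : (∑ i, l j i * (u i * s + v i * t)) = A j * s + B j * t := by
      rw [hA, hB]
      simp only
      rw [Finset.sum_mul, Finset.sum_mul, ← Finset.sum_add_distrib]
      exact Finset.sum_congr rfl (fun i _ => by ring)
    rw [hinner]
  have hF : ∀ s t : ℝ, (∏ j, (a j * s + b j * t)) = ∑ j, lam j * (A j * s + B j * t) ^ 4 :=
    fun s t => (hevalg s t).symm.trans (hgf s t)
  have hnotF : ¬ ∃ c p q : ℝ, ∀ s t : ℝ,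
      (∏ j, (a j * s + b j * t)) = c * (p * s + q * t) ^ 4 := by
    rintro ⟨c, p, q, hcpq⟩
    apply hnotpow
    refine ⟨c, p, q, ?_⟩
    apply MvPolynomial.funext
    intro x
    have hx : ![x 0, x 1] = x := by funext i; fin_cases i <;> rfl
    calc eval x g = eval ![x 0, x 1] g := by rw [hx]
      _ = ∏ j, (a j * (x 0) + b j * (x 1)) := hevalg (x 0) (x 1)
      _ = c * (p * x 0 + q * x 1) ^ 4 := hcpq _ _
      _ = eval x (C c * (C p * X 0 + C q * X 1) ^ 4) := by simp
  obtain ⟨j1, j2, hne, h1, h2⟩ := core lam A B a b hlam hF hnotF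
  -- positives, via the negated product
  set a' : Fin 4 → ℝ := Function.update a 0 (-(a 0)) with ha'
  set b' : Fin 4 → ℝ := Function.update b 0 (-(b 0)) with hb'
  have ea0 : a' 0 = -(a 0) := by rw [ha']; simp
  have eb0 : b' 0 = -(b 0) := by rw [hb']; simp
  have ea1 : a' 1 = a 1 := by rw [ha']; exact Function.update_of_ne (by decide) _ _
  have eb1 : b' 1 = b 1 := by rw [hb']; exact Function.update_of_ne (by decide) _ _
  have ea2 : a' 2 = a 2 := by rw [ha']; exact Function.update_of_ne (by decide) _ _
  have eb2 : b' 2 = b 2 := by rw [hb']; exact Function.update_of_ne (by decide) _ _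
  have ea3 : a' 3 = a 3 := by rw [ha']; exact Function.update_of_ne (by decide) _ _
  have eb3 : b' 3 = b 3 := by rw [hb']; exact Function.update_of_ne (by decide) _ _
  have hprodneg : ∀ s t : ℝ,
      (∏ j, (a' j * s + b' j * t)) = -(∏ j, (a j * s + b j * t)) := by
    intro s t
    rw [Fin.prod_univ_four, Fin.prod_univ_four, ea0, eb0, ea1, eb1, ea2, eb2, ea3, eb3]
    ring
  have hF' : ∀ s t : ℝ,
      (∏ j, (a' j * s + b' j * t)) = ∑ j, (-lam j) * (A j * s + B j * t) ^ 4 := by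
    intro s t
    rw [hprodneg s t, hF s t, ← Finset.sum_neg_distrib]
    exact Finset.sum_congr rfl (fun j _ => by ring)
  have hnotF' : ¬ ∃ c p q : ℝ, ∀ s t : ℝ,
      (∏ j, (a' j * s + b' j * t)) = c * (p * s + q * t) ^ 4 := by
    rintro ⟨c, p, q, hcpq⟩
    refine hnotF ⟨-c, p, q, fun s t => ?_⟩
    have h := hcpq s t
    rw [hprodneg s t] at h
    linarith [h]
  obtain ⟨j3, j4, hne2, h3, h4⟩ := core (fun j => -lam j) A B a' b'
    (fun j => by simpa using hlam j) hF' hnotF'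
  constructor
  · have hsub : ({j3, j4} : Set (Fin k)) ⊆ {j : Fin k | 0 < lam j} := by
      intro x hx
      rcases hx with h | h
      · subst h; exact Set.mem_setOf.2 (by linarith [h3])
      · simp only [Set.mem_singleton_iff] at h
        subst h; exact Set.mem_setOf.2 (by linarith [h4])
    calc 2 = ({j3, j4} : Set (Fin k)).ncard := (Set.ncard_pair hne2).symm
      _ ≤ _ := Set.ncard_le_ncard hsub (Set.toFinite _)
  · have hsub : ({j1, j2} : Set (Fin k)) ⊆ {j : Fin k | lam j < 0} := by
      intro x hx
      rcases hx with h | h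
      · subst h; exact Set.mem_setOf.2 h1
      · simp only [Set.mem_singleton_iff] at h
        subst h; exact Set.mem_setOf.2 h2
    calc 2 = ({j1, j2} : Set (Fin k)).ncard := (Set.ncard_pair hne).symm
      _ ≤ _ := Set.ncard_le_ncard hsub (Set.toFinite _)
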